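/- Let p ∈ (0,1], define h : ℕ → ℝ by h(k) = p·(1−p)^k, and let R : ℤ → ℝ be an even function (R(−k) = R(k)) satisfying Σ_{k∈ℤ} (1−p)^{|k|} |R(k)| < ∞ (so that all series below converge absolutely). Then for every t ∈ ℤ, the double convolution Σ_{m≥0} Σ_{n≥0} h(m) · h(n) · R(t − m + n) equals Σ_{j=−∞}^{|t|} Σ_{k=j}^{∞} p² · (1−p)^{|t|+k−2j} · R(k). (This is the deterministic series identity (17) of the paper, computing (h ⋆ R_{yy} ⋆ h*)[t] for the packet-drop impulse response H(z) = p/(1 − z⁻¹(1−p)).) -/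
import Mathlib

open Function

/-- Shifted weighted summability. -/
lemma aux_sumR (q : ℝ) (hq0 : 0 ≤ q) (hq1 : q < 1) (R : ℤ → ℝ)
    (hsum : Summable fun k : ℤ => q ^ k.natAbs * |R k|) (s : ℤ) :
    Summable fun k : ℤ => q ^ (k - s).natAbs * |R k| := by
  rcases eq_or_lt_of_le hq0 with h0 | h0
  · apply summable_of_ne_finset_zero (s := {s})
    intro k hk
    simp only [Finset.mem_singleton] at hk
    have hne : (k - s).natAbs ≠ 0 := by omega
    rw [← h0, zero_pow hne, zero_mul]
  · have hne : q ^ s.natAbs ≠ 0 := pow_ne_zero _ (ne_of_gt h0)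
    rw [← summable_mul_left_iff hne]
    apply Summable.of_nonneg_of_le _ _ hsum
    · intro k; positivity
    · intro k
      rw [← mul_assoc, ← pow_add]
      refine mul_le_mul_of_nonneg_right ?_ (abs_nonneg _)
      exact pow_le_pow_of_le_one hq0 (le_of_lt hq1) (by omega)

lemma aux_prod (q : ℝ) (hq0 : 0 ≤ q) (hq1 : q < 1) (R : ℤ → ℝ)
    (hsum : Summable fun k : ℤ => q ^ k.natAbs * |R k|) (s : ℤ) :
    Summable fun x : ℕ × ℕ => q ^ (x.1 + x.2) * |R (s - (x.1 : ℤ) + (x.2 : ℤ))| := by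
  have hgeom : Summable fun j : ℕ => (q ^ 2) ^ j :=
    summable_geometric_of_lt_one (by positivity) (by nlinarith)
  have hR := aux_sumR q hq0 hq1 R hsum s
  have hF : Summable fun y : ℕ × ℤ => (q ^ 2) ^ y.1 * (q ^ (y.2 - s).natAbs * |R y.2|) :=
    hgeom.mul_of_nonneg hR (fun j => by positivity) (fun k => by positivity)
  have hi : Function.Injective
      (fun x : ℕ × ℕ => ((min x.1 x.2, s - (x.1 : ℤ) + (x.2 : ℤ)) : ℕ × ℤ)) := by
    intro a b hab
    simp only [Prod.mk.injEq] at hab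
    obtain ⟨h1, h2⟩ := hab
    ext <;> omega
  have hcomp := hF.comp_injective hi
  apply hcomp.congr
  intro x
  simp only [Function.comp_apply]
  have harg : s - (x.1 : ℤ) + (x.2 : ℤ) - s = (x.2 : ℤ) - (x.1 : ℤ) := by ring
  rw [harg, ← pow_mul, ← mul_assoc, ← pow_add]
  congr 2
  omega

lemma aux_key (p : ℝ) (hp0 : 0 < p) (hp1 : p ≤ 1) (R : ℤ → ℝ)
    (hReven : ∀ k : ℤ, R (-k) = R k)
    (hsum : Summable fun k : ℤ => (1 - p) ^ k.natAbs * |R k|) (s : ℤ) :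
    ∑' m : ℕ, ∑' n : ℕ, p ^ 2 * (1 - p) ^ (m + n) * R (s - (m : ℤ) + (n : ℤ)) =
    ∑' m : ℕ, ∑' n : ℕ, p ^ 2 * (1 - p) ^ (m + n) * R (-s - (m : ℤ) + (n : ℤ)) := by
  set q : ℝ := 1 - p with hq
  have hq0 : 0 ≤ q := by linarith
  have hq1 : q < 1 := by linarith
  set f : ℕ → ℕ → ℝ := fun n m => p ^ 2 * q ^ (m + n) * R (-s - (n : ℤ) + (m : ℤ)) with hf
  have hunc : Summable (Function.uncurry f) := by
    have habs := aux_prod q hq0 hq1 R hsum (-s)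
    apply Summable.of_abs
    apply ((habs.mul_left (p ^ 2)).congr)
    intro x
    simp only [hf, Function.uncurry, abs_mul, abs_pow, abs_of_nonneg hp0.le,
      abs_of_nonneg hq0, Nat.add_comm x.2 x.1]
    ring
  calc ∑' m : ℕ, ∑' n : ℕ, p ^ 2 * q ^ (m + n) * R (s - (m : ℤ) + (n : ℤ))
      = ∑' m : ℕ, ∑' n : ℕ, f n m := by
        apply tsum_congr; intro m; apply tsum_congr; intro n
        simp only [hf]
        have e : s - (m : ℤ) + (n : ℤ) = -(-s - (n : ℤ) + (m : ℤ)) := by ring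
        rw [e, hReven]
    _ = ∑' n : ℕ, ∑' m : ℕ, f n m := Summable.tsum_comm hunc
    _ = ∑' m : ℕ, ∑' n : ℕ, p ^ 2 * q ^ (m + n) * R (-s - (m : ℤ) + (n : ℤ)) := by
        apply tsum_congr; intro m; apply tsum_congr; intro n
        simp only [hf]
        rw [Nat.add_comm]

/-- deterministic series identity (17): for `p ∈ (0,1]`,
`h k = p·(1−p)^k`, and an even function `R` with `Σ_{k∈ℤ} (1−p)^{|k|}|R k| < ∞`,
the double convolution `Σ_{m≥0} Σ_{n≥0} h m · h n · R (t − m + n)` equals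
`Σ_{j=−∞}^{|t|} Σ_{k=j}^{∞} p² (1−p)^{|t|+k−2j} R k`; the right-hand side is
reindexed by `j = |t| − j'` (`j' : ℕ`) and `k = |t| − j' + k'` (`k' : ℕ`), so the
exponent `|t|+k−2j` becomes `j' + k'`. -/
theorem stmt16 (p : ℝ) (hp0 : 0 < p) (hp1 : p ≤ 1)
    (h : ℕ → ℝ) (hh : ∀ k, h k = p * (1 - p) ^ k)
    (R : ℤ → ℝ) (hReven : ∀ k : ℤ, R (-k) = R k)
    (hsum : Summable fun k : ℤ => (1 - p) ^ k.natAbs * |R k|) :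
    ∀ t : ℤ,
      ∑' m : ℕ, ∑' n : ℕ, h m * h n * R (t - (m : ℤ) + (n : ℤ)) =
      ∑' j' : ℕ, ∑' k' : ℕ,
        p ^ 2 * (1 - p) ^ (j' + k') * R ((t.natAbs : ℤ) - (j' : ℤ) + (k' : ℤ)) := by
  intro t
  have hL : ∑' m : ℕ, ∑' n : ℕ, h m * h n * R (t - (m : ℤ) + (n : ℤ)) =
      ∑' m : ℕ, ∑' n : ℕ, p ^ 2 * (1 - p) ^ (m + n) * R (t - (m : ℤ) + (n : ℤ)) := by
    apply tsum_congr; intro m; apply tsum_congr; intro n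
    rw [hh, hh, pow_add]; ring
  rw [hL]
  rcases Int.natAbs_eq t with ht | ht
  · rw [← ht]
  · have h1 : (t.natAbs : ℤ) = -t := by omega
    rw [h1]
    exact aux_key p hp0 hp1 R hReven hsum t
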